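/- Let E and F be finite-dimensional real inner product spaces, let T : E → E and M : E → F be linear maps, and let N_t ≥ 1 be a natural number. Given a source sequence S = (S_0, …, S_{N_t−1}) in E, define the state sequence X_0, …, X_{N_t−1} in E by X_0 = S_0 and X_{n+1} = T X_n + S_{n+1} for 0 ≤ n ≤ N_t−2, and define the measurement map H : E^{N_t} → F^{N_t} by H(S)_n = M X_n. Given data P̂ = (P̂_0, …, P̂_{N_t−1}) in F, define the adjoint state sequence X*_{N_t−1}, X*_{N_t−2}, …, X*_{−1} in E backwards by X*_{N_t−1} = 0 and X*_{n−1} = T* X*_n + M* P̂_n for n = N_t−1 down to 0, where T* and M* denote the adjoint linear maps. Then ⟨H(S), P̂⟩ = ⟨S, X*⟩, i.e. ∑_{n=0}^{N_t−1} ⟨M X_n, P̂_n⟩_F = ∑_{n=0}^{N_t−1} ⟨S_n, X*_{n−1}⟩_E. In particular the adjoint of H maps P̂ to the sequence (X*_{−1}, X*_{0}, …, X*_{N_t−2}). -/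

import Mathlib

/-- The adjoint of the discretised photoacoustic time-stepping forward model
(Lemma 2 of the paper): if `X` is the state sequence driven by the source `S`
via `X 0 = S 0`, `X (n+1) = T (X n) + S (n+1)`, and `Xs` is the adjoint state
sequence computed backwards by `Xs (Nt-1) = 0`, `Xs (n-1) = T* (Xs n) + M* (P n)`,
then `⟨H S, P⟩ = ⟨S, Xs⟩`, i.e.
`∑_{n=0}^{Nt-1} ⟨M (X n), P n⟩ = ∑_{n=0}^{Nt-1} ⟨S n, Xs (n-1)⟩`. -/
theorem discretised_adjoint_inner_product
    {E F : Type*} [NormedAddCommGroup E] [InnerProductSpace ℝ E] [FiniteDimensional ℝ E]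
    [NormedAddCommGroup F] [InnerProductSpace ℝ F] [FiniteDimensional ℝ F]
    (T : E →ₗ[ℝ] E) (M : E →ₗ[ℝ] F) (Nt : ℕ) (hNt : 1 ≤ Nt)
    (S : ℤ → E) (X : ℤ → E) (P : ℤ → F) (Xs : ℤ → E)
    (hX0 : X 0 = S 0)
    (hX : ∀ n : ℤ, 0 ≤ n → n + 1 ≤ (Nt : ℤ) - 1 → X (n + 1) = T (X n) + S (n + 1))
    (hXsN : Xs ((Nt : ℤ) - 1) = 0)
    (hXs : ∀ n : ℤ, 0 ≤ n → n ≤ (Nt : ℤ) - 1 →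
      Xs (n - 1) = (LinearMap.adjoint T) (Xs n) + (LinearMap.adjoint M) (P n)) :
    ∑ n ∈ Finset.Icc (0 : ℤ) ((Nt : ℤ) - 1), (inner ℝ (M (X n)) (P n) : ℝ)
      = ∑ n ∈ Finset.Icc (0 : ℤ) ((Nt : ℤ) - 1), (inner ℝ (S n) (Xs (n - 1)) : ℝ) := by
  have key : ∀ n : ℤ, 0 ≤ n → n ≤ (Nt : ℤ) - 1 →
      (inner ℝ (S n) (Xs (n - 1)) : ℝ) - inner ℝ (M (X n)) (P n)
        = inner ℝ (S n - X n) (Xs (n - 1)) + inner ℝ (T (X n)) (Xs n) := by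
    intro n hn hn'
    rw [hXs n hn hn']
    simp only [inner_add_right, map_sub, inner_sub_left, LinearMap.adjoint_inner_right]
    ring
  have main : ∀ k : ℤ, 0 ≤ k → k ≤ (Nt : ℤ) - 1 →
      ∑ n ∈ Finset.Icc (0 : ℤ) k,
        ((inner ℝ (S n) (Xs (n - 1)) : ℝ) - inner ℝ (M (X n)) (P n))
        = inner ℝ (T (X k)) (Xs k) := by
    refine fun k hk => Int.le_induction
      (motive := fun k _ => k ≤ (Nt : ℤ) - 1 →
        ∑ n ∈ Finset.Icc (0 : ℤ) k,
          ((inner ℝ (S n) (Xs (n - 1)) : ℝ) - inner ℝ (M (X n)) (P n))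
          = inner ℝ (T (X k)) (Xs k)) ?_ ?_ k hk
    · intro hle
      rw [Finset.Icc_self, Finset.sum_singleton, key 0 le_rfl hle, hX0, sub_self,
        inner_zero_left, zero_add]
    · intro k hk ih hle
      have hk' : k ≤ (Nt : ℤ) - 1 := by omega
      have hins : Finset.Icc (0:ℤ) (k+1) = insert (k+1) (Finset.Icc 0 k) := by
        ext x; simp only [Finset.mem_insert, Finset.mem_Icc]; omega
      rw [hins, Finset.sum_insert (by simp only [Finset.mem_Icc]; omega), ih hk',
        key (k+1) (by omega) hle]
      have hx1 : S (k+1) - X (k+1) = -(T (X k)) := by rw [hX k hk hle]; abel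
      rw [show k + 1 - 1 = k by ring, hx1, inner_neg_left]
      ring
  have h := main ((Nt : ℤ) - 1) (by omega) le_rfl
  rw [hXsN, inner_zero_right, Finset.sum_sub_distrib, sub_eq_zero] at h
  exact h.symm
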